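/- Define the extension Q̄^{(n)}(y_1,y_2) = (1/2πi)∮_{Γ_0} dw (1+w)^{y_1−y_2−1}/(2^{y_1−y_2} w^n) for all y_1, y_2 ∈ ℤ (so Q̄^{(n)} agrees with Q^n when y_1 − y_2 ≥ n). Then Q^{−1} Q̄^{(n)} = Q̄^{(n)} Q^{−1} = Q̄^{(n−1)} for n > 1, and Q^{−1} Q̄^{(1)} = Q̄^{(1)} Q^{−1} = 0, where Q^{−1} = I + 2∇⁺ with ∇⁺f(x) = f(x+1) − f(x). -/

import Mathlib

open Complex Metric

/-- The analytic extension `Q̄^{(n)}(y₁,y₂) = (1/2πi)∮ dw (1+w)^{y₁−y₂−1}/(2^{y₁−y₂} w^n)`. -/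
noncomputable def Qbar (n : ℕ) (y₁ y₂ : ℤ) : ℂ :=
  (2 * Real.pi * I)⁻¹ *
    ∮ w in C(0, (1 : ℝ) / 2), (1 + w) ^ (y₁ - y₂ - 1) / ((2 : ℂ) ^ (y₁ - y₂) * w ^ n)

/-- `Qbar` as a function of the difference `d = y₁ - y₂`. -/
noncomputable def Qfun (n : ℕ) (d : ℤ) : ℂ :=
  (2 * Real.pi * I)⁻¹ *
    ∮ w in C(0, (1 : ℝ) / 2), (1 + w) ^ (d - 1) / ((2 : ℂ) ^ d * w ^ n)

lemma Qbar_eq (n : ℕ) (y₁ y₂ : ℤ) : Qbar n y₁ y₂ = Qfun n (y₁ - y₂) := rfl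

lemma two_zpow_ne (d : ℤ) : ((2 : ℂ) ^ d) ≠ 0 :=
  zpow_ne_zero d (by norm_num)

lemma one_add_ne {w : ℂ} (h : ‖w‖ ≤ 1 / 2) : (1 : ℂ) + w ≠ 0 := by
  intro h0
  have hw : w = -1 := by linear_combination h0
  rw [hw] at h
  simp at h
  norm_num at h

lemma integrable_aux (k d : ℤ) (n : ℕ) :
    CircleIntegrable (fun w : ℂ => (1 + w) ^ k / ((2 : ℂ) ^ d * w ^ n)) 0 (1 / 2) := by
  apply ContinuousOn.circleIntegrable (by norm_num)
  apply ContinuousOn.div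
  · refine (continuousOn_const.add continuousOn_id).zpow₀ k fun w hw => Or.inl ?_
    rw [mem_sphere_iff_norm, sub_zero] at hw
    exact one_add_ne (le_of_eq hw)
  · exact continuousOn_const.mul (continuousOn_id.pow n)
  · intro w hw
    have hw0 : w ≠ 0 := by
      intro h; rw [mem_sphere_iff_norm, h] at hw; norm_num at hw
    exact mul_ne_zero (two_zpow_ne d) (pow_ne_zero _ hw0)

lemma double_aux (d : ℤ) (n : ℕ) (w : ℂ) :
    2 * ((1 + w) ^ (d + 1 - 1) / ((2 : ℂ) ^ (d + 1) * w ^ n)) =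
      (1 + w) ^ d / ((2 : ℂ) ^ d * w ^ n) := by
  have h2 : ((2 : ℂ) ^ (d + 1)) = 2 * 2 ^ d := by
    rw [zpow_add_one₀ (by norm_num : (2:ℂ) ≠ 0)]; ring
  rw [h2, add_sub_cancel_right, mul_assoc, ← mul_div_assoc,
    mul_div_mul_left _ _ (by norm_num : (2:ℂ) ≠ 0)]

lemma pointwise_aux {w : ℂ} (hw0 : w ≠ 0) (h1 : (1 : ℂ) + w ≠ 0) (d : ℤ) (m : ℕ) :
    (1 + w) ^ d / ((2 : ℂ) ^ d * w ^ (m + 1)) -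
      (1 + w) ^ (d - 1) / ((2 : ℂ) ^ d * w ^ (m + 1)) =
      (1 + w) ^ (d - 1) / ((2 : ℂ) ^ d * w ^ m) := by
  have h3 : (1 + w) ^ d = (1 + w) ^ (d - 1) * (1 + w) := by
    rw [← zpow_add_one₀ h1]; ring_nf
  have h4 := two_zpow_ne d
  rw [h3, pow_succ]
  field_simp
  ring

lemma main_aux (m : ℕ) (d : ℤ) :
    -Qfun (m + 1) d + 2 * Qfun (m + 1) (d + 1) = Qfun m d := by
  unfold Qfun
  have hInt1 := integrable_aux d d (m + 1)
  have hInt2 := integrable_aux (d - 1) d (m + 1)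
  have h2 : (∮ w in C(0, (1:ℝ)/2), (1 + w) ^ (d + 1 - 1) / ((2 : ℂ) ^ (d + 1) * w ^ (m + 1)))
      = ∮ w in C(0, (1:ℝ)/2), (2:ℂ)⁻¹ • ((1 + w) ^ d / ((2 : ℂ) ^ d * w ^ (m + 1))) := by
    congr 1
    funext w
    rw [← double_aux d (m + 1) w, smul_eq_mul]
    field_simp
  have key : (∮ w in C(0, (1:ℝ)/2),
      ((1 + w) ^ d / ((2 : ℂ) ^ d * w ^ (m + 1)) -
        (1 + w) ^ (d - 1) / ((2 : ℂ) ^ d * w ^ (m + 1)))) =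
      ∮ w in C(0, (1:ℝ)/2), (1 + w) ^ (d - 1) / ((2 : ℂ) ^ d * w ^ m) := by
    apply circleIntegral.integral_congr (by norm_num)
    intro w hw
    rw [mem_sphere_iff_norm, sub_zero] at hw
    have hw0 : w ≠ 0 := by intro h; rw [h] at hw; norm_num at hw
    have h1 : (1 : ℂ) + w ≠ 0 := one_add_ne (le_of_eq hw)
    exact pointwise_aux hw0 h1 d m
  rw [circleIntegral.integral_sub hInt1 hInt2] at key
  rw [h2, circleIntegral.integral_smul (2:ℂ)⁻¹ _ 0 ((1:ℝ)/2), ← key]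
  simp only [smul_eq_mul]
  ring

lemma zero_aux (d : ℤ) : Qfun 0 d = 0 := by
  unfold Qfun
  have : (∮ w in C(0, (1:ℝ)/2), (1 + w) ^ (d - 1) / ((2 : ℂ) ^ d * w ^ 0)) = 0 := by
    apply circleIntegral_eq_zero_of_differentiable_on_off_countable (by norm_num)
      Set.countable_empty
    · apply ContinuousOn.div
      · refine (continuousOn_const.add continuousOn_id).zpow₀ (d - 1) fun w hw => Or.inl ?_
        rw [mem_closedBall_iff_norm, sub_zero] at hw
        exact one_add_ne hw
      · exact continuousOn_const.mul (continuousOn_id.pow 0)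
      · intro w _
        simpa using two_zpow_ne d
    · intro z hz
      have h1 : (1 : ℂ) + z ≠ 0 := by
        apply one_add_ne
        have := hz.1
        rw [mem_ball_iff_norm, sub_zero] at this
        linarith
      apply DifferentiableAt.div
      · exact ((differentiableAt_const _).add differentiableAt_id).zpow (Or.inl h1)
      · simp only [pow_zero, mul_one]
        exact differentiableAt_const _
      · simpa using two_zpow_ne d
  rw [this, mul_zero]

/-- `Q⁻¹ Q̄^{(n)} = Q̄^{(n)} Q⁻¹ = Q̄^{(n−1)}` for `n > 1`, and
`Q⁻¹ Q̄^{(1)} = Q̄^{(1)} Q⁻¹ = 0`, where `Q⁻¹ = I + 2∇⁺` acts as the kernel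
`(Q⁻¹ A)(y₁,y₂) = −A(y₁,y₂) + 2A(y₁+1,y₂)` on the left and
`(A Q⁻¹)(y₁,y₂) = −A(y₁,y₂) + 2A(y₁,y₂−1)` on the right. -/
theorem Qbar_relations (n : ℕ) (y₁ y₂ : ℤ) :
    (1 < n → -Qbar n y₁ y₂ + 2 * Qbar n (y₁ + 1) y₂ = Qbar (n - 1) y₁ y₂) ∧
    (1 < n → -Qbar n y₁ y₂ + 2 * Qbar n y₁ (y₂ - 1) = Qbar (n - 1) y₁ y₂) ∧
    (-Qbar 1 y₁ y₂ + 2 * Qbar 1 (y₁ + 1) y₂ = 0) ∧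
    (-Qbar 1 y₁ y₂ + 2 * Qbar 1 y₁ (y₂ - 1) = 0) := by
  have e1 : y₁ + 1 - y₂ = y₁ - y₂ + 1 := by ring
  have e2 : y₁ - (y₂ - 1) = y₁ - y₂ + 1 := by ring
  refine ⟨fun hn => ?_, fun hn => ?_, ?_, ?_⟩ <;>
    simp only [Qbar_eq, e1, e2]
  · obtain ⟨m, rfl⟩ : ∃ m, n = m + 1 := ⟨n - 1, by omega⟩
    simpa using main_aux m (y₁ - y₂)
  · obtain ⟨m, rfl⟩ : ∃ m, n = m + 1 := ⟨n - 1, by omega⟩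
    simpa using main_aux m (y₁ - y₂)
  · exact (main_aux 0 (y₁ - y₂)).trans (zero_aux _)
  · exact (main_aux 0 (y₁ - y₂)).trans (zero_aux _)
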